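/- The image Ψ(R^N) of the map Ψ(x) = p0 + A(x) - (1/2)‖x‖² w equals the set E^N = {p ∈ V^{N+1} : ⟨p,w⟩ = 1}. -/
import Mathlib


open scoped RealInnerProductSpace

noncomputable section

/-- The Lorentz (Minkowski) scalar product of signature `(+,...,+,-)` on
`EuclideanSpace ℝ (Fin (k+1))`: the last coordinate is timelike. -/
def minkL {k : ℕ} (x y : EuclideanSpace ℝ (Fin (k + 1))) : ℝ :=
  (∑ i : Fin k, x i.castSucc * y i.castSucc) - x (Fin.last k) * y (Fin.last k)

lemma minkL_comm {k : ℕ} (x y : EuclideanSpace ℝ (Fin (k + 1))) :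
    minkL x y = minkL y x := by
  simp [minkL, mul_comm]

lemma minkL_add_left {k : ℕ} (x y z : EuclideanSpace ℝ (Fin (k + 1))) :
    minkL (x + y) z = minkL x z + minkL y z := by
  simp [minkL, PiLp.add_apply, add_mul, Finset.sum_add_distrib]
  ring

lemma minkL_sub_left {k : ℕ} (x y z : EuclideanSpace ℝ (Fin (k + 1))) :
    minkL (x - y) z = minkL x z - minkL y z := by
  simp [minkL, PiLp.sub_apply, sub_mul, Finset.sum_sub_distrib]
  ring

lemma minkL_smul_left {k : ℕ} (c : ℝ) (x z : EuclideanSpace ℝ (Fin (k + 1))) :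
    minkL (c • x) z = c * minkL x z := by
  simp [minkL, PiLp.smul_apply, smul_eq_mul, Finset.mul_sum, mul_sub, mul_assoc]

lemma minkL_add_right {k : ℕ} (x y z : EuclideanSpace ℝ (Fin (k + 1))) :
    minkL z (x + y) = minkL z x + minkL z y := by
  rw [minkL_comm, minkL_add_left, minkL_comm x z, minkL_comm y z]

lemma minkL_sub_right {k : ℕ} (x y z : EuclideanSpace ℝ (Fin (k + 1))) :
    minkL z (x - y) = minkL z x - minkL z y := by
  rw [minkL_comm, minkL_sub_left, minkL_comm x z, minkL_comm y z]

lemma minkL_smul_right {k : ℕ} (c : ℝ) (x z : EuclideanSpace ℝ (Fin (k + 1))) :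
    minkL z (c • x) = c * minkL z x := by
  rw [minkL_comm, minkL_smul_left, minkL_comm x z]

/-- the image of `Ψ x = p0 + A x - (‖x‖²/2) • w`, with `A` a linear isometry
of `ℝ^N` onto `span{p0,w}ᗮ`, is `E^N = {p ∈ V^{N+1} : ⟨p,w⟩ = 1}`. -/
theorem image_of_Psi_eq_EN (N : ℕ)
    (w p0 : EuclideanSpace ℝ (Fin (N + 2)))
    (A : EuclideanSpace ℝ (Fin N) →ₗ[ℝ] EuclideanSpace ℝ (Fin (N + 2)))
    (hw : minkL w w = 0) (hp0 : minkL p0 p0 = 0) (hp0w : minkL p0 w = 1)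
    (hA : ∀ x y, minkL (A x) (A y) = ⟪x, y⟫)
    (hAp0 : ∀ x, minkL (A x) p0 = 0) (hAw : ∀ x, minkL (A x) w = 0)
    (hAsurj : ∀ v, minkL v p0 = 0 → minkL v w = 0 → v ∈ Set.range A) :
    Set.range (fun x : EuclideanSpace ℝ (Fin N) => p0 + A x - (‖x‖ ^ 2 / 2) • w)
      = {p | minkL p p = 0 ∧ minkL p w = 1} := by
  ext p
  constructor
  · rintro ⟨x, rfl⟩
    have hinner : ⟪x, x⟫ = ‖x‖ ^ 2 := real_inner_self_eq_norm_sq x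
    constructor
    · simp only [minkL_sub_left, minkL_sub_right, minkL_add_left, minkL_add_right,
        minkL_smul_left, minkL_smul_right, hw, hp0, hp0w, hA, hAp0, hAw]
      rw [minkL_comm w p0, hp0w, minkL_comm w (A x), hAw,
        minkL_comm p0 (A x), hAp0, hinner]
      ring
    · simp only [minkL_sub_left, minkL_add_left, minkL_smul_left, hw, hp0w, hAw]
      ring
  · rintro ⟨hpp, hpw⟩
    set c := minkL p p0 with hc
    have hv1 : minkL (p - c • w - p0) p0 = 0 := by
      simp only [minkL_sub_left, minkL_smul_left, hp0, hp0w, ← hc]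
      rw [minkL_comm w p0, hp0w]; ring
    have hv2 : minkL (p - c • w - p0) w = 0 := by
      simp only [minkL_sub_left, minkL_smul_left, hw, hp0w, hpw]; ring
    obtain ⟨x, hx⟩ := hAsurj _ hv1 hv2
    have hpx : p = p0 + A x + c • w := by
      rw [hx]; abel
    have hkey : ‖x‖ ^ 2 + 2 * c = 0 := by
      have := hpp
      rw [hpx] at this
      simp only [minkL_add_left, minkL_add_right, minkL_smul_left, minkL_smul_right,
        hp0, hp0w, hw, hA, hAp0, hAw] at this
      rw [minkL_comm p0 (A x), hAp0, minkL_comm w p0, hp0w, minkL_comm w (A x), hAw,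
        real_inner_self_eq_norm_sq] at this
      linarith
    refine ⟨x, ?_⟩
    show p0 + A x - (‖x‖ ^ 2 / 2) • w = p
    rw [hpx]
    have h2 : ‖x‖ ^ 2 / 2 = -c := by linarith
    rw [h2, neg_smul]
    abel
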